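/- Suppose a finite ranked poset P of rank n with 0̂ and 1̂ carries a local action of S_n on its maximal chains. Then for every maximal chain c, the stabilizer of c is a Young subgroup of S_n, i.e., the product S_{B_1} × ... × S_{B_k} over the blocks of some set partition {B_1,...,B_k} of [n]. -/

import Mathlib

open MvPolynomial

section AbstractPoset

variable {P : Type*} [PartialOrder P] [BoundedOrder P]

/-- A maximal chain of length `n` in a bounded poset `P`: a saturated chain
`⊥ = c 0 ⋖ c 1 ⋖ ⋯ ⋖ c n = ⊤`. -/
def IsMaxChainOf (n : ℕ) (c : Fin (n + 1) → P) : Prop :=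
  c 0 = ⊥ ∧ c (Fin.last n) = ⊤ ∧ ∀ i : Fin n, c i.castSucc ⋖ c i.succ

/-- `ρ` is a rank function exhibiting `P` as a ranked poset of rank `n`. -/
def IsRankFunction (n : ℕ) (ρ : P → ℕ) : Prop :=
  ρ ⊥ = 0 ∧ ρ ⊤ = n ∧ (∀ a b : P, a ⋖ b → ρ b = ρ a + 1) ∧ ∀ x : P, ρ x ≤ n

variable {L : Type*} [LinearOrder L] {n : ℕ}

/-- A `C`-labeling: the label of the `r`-th step of a maximal chain depends only on the
initial subchain up to rank `r`. -/
def IsCLabeling (Λ : {c : Fin (n + 1) → P // IsMaxChainOf n c} → Fin n → L) : Prop :=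
  ∀ c c' : {c : Fin (n + 1) → P // IsMaxChainOf n c}, ∀ r : Fin (n + 1),
    (∀ s : Fin (n + 1), s ≤ r → c.1 s = c'.1 s) →
      ∀ s : Fin n, (s : ℕ) < (r : ℕ) → Λ c s = Λ c' s

/-- An `S`-labeling: `Λ` is injective, and for every maximal chain `c` and every rank `i`
(`1 ≤ i ≤ n-1`, encoded by `i+1` with `i+1 < n` below being the 0-indexed positions `i`,
`i+1` of the two labels) at which consecutive labels differ, there is a unique maximal
chain `c'` differing from `c` only at rank `i` whose label sequence is that of `c` with
these two labels interchanged. -/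
def IsSLabeling (Λ : {c : Fin (n + 1) → P // IsMaxChainOf n c} → Fin n → L) : Prop :=
  Function.Injective Λ ∧
    ∀ (c : {c : Fin (n + 1) → P // IsMaxChainOf n c}) (i : ℕ) (h : i + 1 < n),
      Λ c ⟨i, by omega⟩ ≠ Λ c ⟨i + 1, h⟩ →
        ∃! c' : {c : Fin (n + 1) → P // IsMaxChainOf n c},
          (∀ r : Fin (n + 1), (r : ℕ) ≠ i + 1 → c'.1 r = c.1 r) ∧
            Λ c' = Λ c ∘ Equiv.swap (⟨i, by omega⟩ : Fin n) ⟨i + 1, h⟩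

/-- An `R`-labeling (for the relation `rel = (· ≤ ·)`), resp. an `R*`-labeling (for
`rel = (· < ·)`): every partial chain `⊥ = w⁰ ⋖ ⋯ ⋖ w^r ≤ u` has a completion by covering
relations from `w^r` to `u` whose labels are weakly (resp. strictly) increasing, and this
completion is unique up to rank `ρ u`. -/
def IsRelLabeling (ρ : P → ℕ) (Λ : {c : Fin (n + 1) → P // IsMaxChainOf n c} → Fin n → L)
    (rel : L → L → Prop) : Prop :=
  ∀ (c : {c : Fin (n + 1) → P // IsMaxChainOf n c}) (r : Fin (n + 1)) (u : P),
    c.1 r ≤ u →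
      ∃ c' : {c : Fin (n + 1) → P // IsMaxChainOf n c},
        ((∀ s : Fin (n + 1), s ≤ r → c'.1 s = c.1 s) ∧
          (∀ s : Fin (n + 1), (s : ℕ) = ρ u → c'.1 s = u) ∧
          (∀ (s : ℕ) (h1 : s < n) (h2 : s + 1 < n), (r : ℕ) ≤ s → s + 2 ≤ ρ u →
            rel (Λ c' ⟨s, h1⟩) (Λ c' ⟨s + 1, h2⟩))) ∧
        ∀ c'' : {c : Fin (n + 1) → P // IsMaxChainOf n c},
          ((∀ s : Fin (n + 1), s ≤ r → c''.1 s = c.1 s) ∧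
            (∀ s : Fin (n + 1), (s : ℕ) = ρ u → c''.1 s = u) ∧
            (∀ (s : ℕ) (h1 : s < n) (h2 : s + 1 < n), (r : ℕ) ≤ s → s + 2 ≤ ρ u →
              rel (Λ c'' ⟨s, h1⟩) (Λ c'' ⟨s + 1, h2⟩))) →
          ∀ s : Fin (n + 1), (s : ℕ) ≤ ρ u → c''.1 s = c'.1 s

/-- A local action of `S_n` on the maximal chains of `P`: a group action (given by a
homomorphism into the permutations of the set of maximal chains) in which each adjacent
transposition `σ_i = (i, i+1)` moves each maximal chain at most at the element of rank `i`. -/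
def IsLocalAction
    (φ : Equiv.Perm (Fin n) →* Equiv.Perm {c : Fin (n + 1) → P // IsMaxChainOf n c}) : Prop :=
  ∀ (i : ℕ) (h : i + 1 < n) (c : {c : Fin (n + 1) → P // IsMaxChainOf n c})
    (r : Fin (n + 1)), (r : ℕ) ≠ i + 1 →
      (φ (Equiv.swap (⟨i, by omega⟩ : Fin n) ⟨i + 1, h⟩) c).1 r = c.1 r

/-- The stabilizer of the maximal chain `c` under the action `φ` is the Young subgroup of
`S_n` associated with the set partition `Q` of `[n]`. -/
def IsYoungStabilizer
    (φ : Equiv.Perm (Fin n) →* Equiv.Perm {c : Fin (n + 1) → P // IsMaxChainOf n c})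
    (c : {c : Fin (n + 1) → P // IsMaxChainOf n c})
    (Q : Finpartition (Finset.univ : Finset (Fin n))) : Prop :=
  ∀ σ : Equiv.Perm (Fin n), φ σ c = c ↔ ∀ B ∈ Q.parts, ∀ a ∈ B, σ a ∈ B

/-- The Frobenius characteristic `ch(ψ) = (1/n!) Σ_σ ψ(σ) p_{cycletype(σ)}` of the character
`ψ` of the permutation action `φ` of `S_n` on the maximal chains of `P` (`ψ(σ)` is the
number of fixed maximal chains of `σ`), expressed as a symmetric polynomial in `d`
variables. -/
noncomputable def frobeniusCh
    (φ : Equiv.Perm (Fin n) →* Equiv.Perm {c : Fin (n + 1) → P // IsMaxChainOf n c})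
    (d : ℕ) : MvPolynomial (Fin d) ℚ :=
  (n.factorial : ℚ)⁻¹ •
    ∑ σ : Equiv.Perm (Fin n),
      (Nat.card {c : {c : Fin (n + 1) → P // IsMaxChainOf n c} // φ σ c = c} : ℚ) •
        ((σ.cycleType.map (psum (Fin d) ℚ)).prod *
          psum (Fin d) ℚ 1 ^ (n - σ.cycleType.sum))

/-- The flag (quasi)symmetric function of the ranked poset `P` (with rank function `ρ`,
of rank `n`) specialized to `d` variables:
`F_P(x₁,…,x_d) = Σ_{⊥ = t₀ ≤ t₁ ≤ ⋯ ≤ t_d = ⊤} ∏_i x_i^{ρ(t_i) - ρ(t_{i-1})}`. -/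
noncomputable def flagPoly (ρ : P → ℕ) (d : ℕ) : MvPolynomial (Fin d) ℚ :=
  ∑ᶠ c ∈ {c : Fin (d + 1) → P | c 0 = ⊥ ∧ c (Fin.last d) = ⊤ ∧ Monotone c},
    ∏ i : Fin d, (X i : MvPolynomial (Fin d) ℚ) ^ (ρ (c i.succ) - ρ (c i.castSucc))

end AbstractPoset

section ProofAux

variable {P : Type*} [PartialOrder P] [BoundedOrder P] {n : ℕ}
  {φ : Equiv.Perm (Fin n) →* Equiv.Perm {c : Fin (n + 1) → P // IsMaxChainOf n c}}

/-- An adjacent transposition `(p, p+1)` with `p ≥ 1` preserves the rank-1 element of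
every maximal chain. -/
lemma aux_adj (hloc : IsLocalAction φ) {p q : Fin n} (hp : (p : ℕ) ≠ 0)
    (hq : (q : ℕ) = (p : ℕ) + 1) (m : {c : Fin (n + 1) → P // IsMaxChainOf n c})
    (r : Fin (n + 1)) (hr : (r : ℕ) = 1) :
    (φ (Equiv.swap p q) m).1 r = m.1 r := by
  have h : (p : ℕ) + 1 < n := hq ▸ q.isLt
  have key := hloc (p : ℕ) h m r (by omega)
  have h1 : (⟨(p : ℕ), by omega⟩ : Fin n) = p := rfl
  have h2 : (⟨(p : ℕ) + 1, h⟩ : Fin n) = q := Fin.ext (by simp [hq])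
  rwa [h1, h2] at key

/-- Any transposition avoiding the value-0 element preserves the rank-1 element of
every maximal chain. -/
lemma aux_swap_gap (hloc : IsLocalAction φ) :
    ∀ (g : ℕ) (p q : Fin n), (p : ℕ) ≠ 0 → (q : ℕ) = (p : ℕ) + g + 1 →
    ∀ (m : {c : Fin (n + 1) → P // IsMaxChainOf n c}) (r : Fin (n + 1)), (r : ℕ) = 1 →
    (φ (Equiv.swap p q) m).1 r = m.1 r := by
  intro g
  induction g with
  | zero =>
    intro p q hp hq m r hr
    exact aux_adj hloc hp (by omega) m r hr
  | succ g IH =>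
    intro p q hp hq m r hr
    set q' : Fin n := ⟨(q : ℕ) - 1, by omega⟩ with hq'def
    have hq'v : (q' : ℕ) = (p : ℕ) + g + 1 := by
      show (q : ℕ) - 1 = (p : ℕ) + g + 1
      omega
    have hpq' : p ≠ q' := Fin.ne_of_val_ne (by omega)
    have hpq : p ≠ q := Fin.ne_of_val_ne (by omega)
    have hswap : Equiv.swap p q = Equiv.swap q' q * Equiv.swap p q' * (Equiv.swap q' q)⁻¹ := by
      have h2 := Equiv.swap_apply_apply (Equiv.swap q' q) p q'
      rw [Equiv.swap_apply_of_ne_of_ne hpq' hpq, Equiv.swap_apply_left] at h2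
      exact h2
    rw [hswap, Equiv.swap_inv, map_mul, map_mul, Equiv.Perm.mul_apply, Equiv.Perm.mul_apply]
    rw [aux_adj hloc (p := q') (q := q) (by omega) (by omega) _ r hr]
    rw [IH p q' hp hq'v _ r hr]
    exact aux_adj hloc (p := q') (q := q) (by omega) (by omega) m r hr

lemma aux_swap' (hloc : IsLocalAction φ) {x z : Fin n} (hxz : x ≠ z)
    (hx : (x : ℕ) ≠ 0) (hz : (z : ℕ) ≠ 0)
    (m : {c : Fin (n + 1) → P // IsMaxChainOf n c}) (r : Fin (n + 1)) (hr : (r : ℕ) = 1) :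
    (φ (Equiv.swap x z) m).1 r = m.1 r := by
  have hv : (x : ℕ) ≠ (z : ℕ) := fun h => hxz (Fin.ext h)
  rcases Nat.lt_or_ge (x : ℕ) (z : ℕ) with h | h
  · exact aux_swap_gap hloc ((z : ℕ) - (x : ℕ) - 1) x z hx (by omega) m r hr
  · rw [Equiv.swap_comm]
    exact aux_swap_gap hloc ((x : ℕ) - (z : ℕ) - 1) z x hz (by omega) m r hr

/-- A permutation fixing the element of value `0` preserves the rank-1 element of
every maximal chain. -/
lemma aux_fix0 (hloc : IsLocalAction φ) :
    ∀ (k : ℕ) (y : Equiv.Perm (Fin n)), y.support.card ≤ k →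
    (∀ x : Fin n, (x : ℕ) = 0 → y x = x) →
    ∀ (m : {c : Fin (n + 1) → P // IsMaxChainOf n c}) (r : Fin (n + 1)), (r : ℕ) = 1 →
    (φ y m).1 r = m.1 r := by
  intro k
  induction k with
  | zero =>
    intro y hy h0 m r hr
    have : y = 1 := by
      rw [← Equiv.Perm.support_eq_empty_iff]
      exact Finset.card_eq_zero.mp (Nat.le_zero.mp hy)
    simp [this]
  | succ k IH =>
    intro y hy h0 m r hr
    by_cases h1 : y = 1
    · simp [h1]
    · obtain ⟨x, hx⟩ : ∃ x, y x ≠ x := by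
        by_contra hcon
        push_neg at hcon
        exact h1 (Equiv.ext hcon)
      have hx0 : (x : ℕ) ≠ 0 := fun h => hx (h0 x h)
      have hyx0 : ((y x : Fin n) : ℕ) ≠ 0 := fun h => hx (y.injective (h0 (y x) h))
      have hxyx : x ≠ y x := fun h => hx h.symm
      set y' := Equiv.swap x (y x) * y with hy'def
      have hcard : y'.support.card ≤ k := by
        have hlt := Equiv.Perm.card_support_swap_mul hx
        rw [← hy'def] at hlt
        omega
      have hy'0 : ∀ w : Fin n, (w : ℕ) = 0 → y' w = w := by
        intro w hw
        have hwx : w ≠ x := fun h => hx0 (h ▸ hw)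
        have hwyx : w ≠ y x := fun h => hyx0 (h ▸ hw)
        simp only [hy'def, Equiv.Perm.mul_apply, h0 w hw]
        exact Equiv.swap_apply_of_ne_of_ne hwx hwyx
      have hyeq : y = Equiv.swap x (y x) * y' := (Equiv.swap_mul_self_mul x (y x) y).symm
      rw [hyeq, map_mul, Equiv.Perm.mul_apply]
      rw [aux_swap' hloc hxyx hx0 hyx0 _ r hr]
      exact IH y' hcard hy'0 m r hr

/-- **Key lemma**: if `σ` stabilizes the maximal chain `c`, then so does the
transposition `(a, σ a)` for every `a`. -/
lemma aux_key (hloc : IsLocalAction φ) (c : {c : Fin (n + 1) → P // IsMaxChainOf n c})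
    {σ : Equiv.Perm (Fin n)} (hσ : φ σ c = c) {a : Fin n} (ha : σ a ≠ a) :
    φ (Equiv.swap a (σ a)) c = c := by
  set b := σ a with hbdef
  have hvab : (a : ℕ) ≠ (b : ℕ) := fun h => ha (Fin.ext h.symm)
  have hn : 1 < n := by
    have h1 := a.isLt; have h2 := b.isLt; omega
  set zero : Fin n := ⟨0, by omega⟩ with hzero
  set one : Fin n := ⟨1, hn⟩ with hone
  have hzv : (zero : ℕ) = 0 := rfl
  have hov : (one : ℕ) = 1 := rfl
  set b' := Equiv.swap a zero b with hb'def
  have hb'0 : (b' : ℕ) ≠ 0 := by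
    by_cases hbz : b = zero
    · have hb'a : b' = a := by rw [hb'def, hbz, Equiv.swap_apply_right]
      rw [hb'a]
      have : (b : ℕ) = 0 := by rw [hbz]
      omega
    · have hba : b ≠ a := fun h => ha h
      have hb'b : b' = b := by
        rw [hb'def]; exact Equiv.swap_apply_of_ne_of_ne hba hbz
      rw [hb'b]
      exact fun h => hbz (Fin.ext h)
  have hzb' : zero ≠ b' := Fin.ne_of_val_ne (by omega)
  have hzo : zero ≠ one := Fin.ne_of_val_ne (by omega)
  set u : Equiv.Perm (Fin n) := Equiv.swap b' one * Equiv.swap a zero with hudef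
  have hua : u a = zero := by
    simp only [hudef, Equiv.Perm.mul_apply, Equiv.swap_apply_left]
    exact Equiv.swap_apply_of_ne_of_ne hzb' hzo
  have hub : u b = one := by
    simp only [hudef, Equiv.Perm.mul_apply, ← hb'def, Equiv.swap_apply_left]
  set c' := φ u c with hc'def
  set σ' := u * σ * u⁻¹ with hσ'def
  have hσ'c : φ σ' c' = c' := by
    simp only [hσ'def, hc'def, map_mul, map_inv, Equiv.Perm.mul_apply]
    rw [Equiv.Perm.coe_inv, Equiv.symm_apply_apply, hσ]
  have hinv0 : u⁻¹ zero = a := by rw [← hua, Equiv.Perm.coe_inv, Equiv.symm_apply_apply]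
  have hinv1 : u⁻¹ one = b := by rw [← hub, Equiv.Perm.coe_inv, Equiv.symm_apply_apply]
  have hσ'0 : σ' zero = one := by
    simp only [hσ'def, Equiv.Perm.mul_apply, hinv0, ← hbdef, hub]
  set y := Equiv.swap zero one * σ' with hydef
  have hy0 : ∀ x : Fin n, (x : ℕ) = 0 → y x = x := by
    intro x hxv
    have hxz : x = zero := Fin.ext (by rw [hzv]; exact hxv)
    rw [hxz]
    simp only [hydef, Equiv.Perm.mul_apply, hσ'0, Equiv.swap_apply_right]
  have hσ'eq : σ' = Equiv.swap zero one * y := (Equiv.swap_mul_self_mul zero one σ').symm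
  set d := φ y c' with hddef
  have hc'd : c' = φ (Equiv.swap zero one) d := by
    conv_lhs => rw [← hσ'c, hσ'eq]
    rw [map_mul, Equiv.Perm.mul_apply]
  have hdc : d = c' := by
    apply Subtype.ext
    funext r
    by_cases hr : (r : ℕ) = 1
    · exact aux_fix0 hloc y.support.card y le_rfl hy0 c' r hr
    · have hloc0 := hloc 0 hn d r (by omega)
      have hz' : (⟨0, by omega⟩ : Fin n) = zero := rfl
      have ho' : (⟨0 + 1, hn⟩ : Fin n) = one := rfl
      rw [hz', ho'] at hloc0
      calc d.1 r = (φ (Equiv.swap zero one) d).1 r := hloc0.symm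
        _ = c'.1 r := by rw [← hc'd]
  have hswapc' : φ (Equiv.swap zero one) c' = c' := by
    rw [← hdc, ← hc'd]
    exact hdc.symm
  have hconj : Equiv.swap a b = u⁻¹ * Equiv.swap zero one * u := by
    have h2 := Equiv.swap_apply_apply u⁻¹ zero one
    rw [hinv0, hinv1, inv_inv] at h2
    exact h2
  rw [hconj, map_mul, map_mul, Equiv.Perm.mul_apply, Equiv.Perm.mul_apply, ← hc'def,
    hswapc', hc'def, ← Equiv.Perm.mul_apply, ← map_mul, inv_mul_cancel, map_one,
    Equiv.Perm.one_apply]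

end ProofAux

/-- **Simion–Stanley Theorem 4.3(a).** If a finite ranked poset `P` of rank `n` with `0̂`
and `1̂` carries a local action of `S_n` on its maximal chains, then the stabilizer of every
maximal chain is a Young subgroup of `S_n`, i.e. the subgroup of permutations preserving
each block of some set partition of `[n]`. -/
theorem local_action_stabilizer_young
    {P : Type*} [Fintype P] [PartialOrder P] [BoundedOrder P]
    (n : ℕ) (ρ : P → ℕ) (hρ : IsRankFunction n ρ)
    (φ : Equiv.Perm (Fin n) →* Equiv.Perm {c : Fin (n + 1) → P // IsMaxChainOf n c})
    (hloc : IsLocalAction φ)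
    (c : {c : Fin (n + 1) → P // IsMaxChainOf n c}) :
    ∃ Q : Finpartition (Finset.univ : Finset (Fin n)), IsYoungStabilizer φ c Q := by
  classical
  have hrel : Equivalence (fun a b : Fin n => a = b ∨ φ (Equiv.swap a b) c = c) := by
    constructor
    · intro a; exact Or.inl rfl
    · intro a b h
      rcases h with h | h
      · exact Or.inl h.symm
      · right; rwa [Equiv.swap_comm]
    · intro a b d hab hbd
      rcases hab with rfl | hab
      · exact hbd
      rcases hbd with rfl | hbd
      · exact Or.inr hab
      by_cases had : a = d
      · exact Or.inl had
      by_cases hab' : a = b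
      · subst hab'; exact Or.inr hbd
      by_cases hbd' : b = d
      · subst hbd'; exact Or.inr hab
      right
      have hconj : Equiv.swap a d
          = Equiv.swap a b * Equiv.swap b d * (Equiv.swap a b)⁻¹ := by
        have h2 := Equiv.swap_apply_apply (Equiv.swap a b) b d
        rw [Equiv.swap_apply_right,
          Equiv.swap_apply_of_ne_of_ne (fun h => had h.symm) (fun h => hbd' h.symm)] at h2
        exact h2
      rw [hconj, Equiv.swap_inv, map_mul, map_mul, Equiv.Perm.mul_apply,
        Equiv.Perm.mul_apply, hab, hbd, hab]
  let s : Setoid (Fin n) := ⟨_, hrel⟩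
  refine ⟨Finpartition.ofSetoid s, ?_⟩
  intro σ
  constructor
  · intro hσ B hB a haB
    have hBpart : B = (Finpartition.ofSetoid s).part a :=
      ((Finpartition.ofSetoid s).part_eq_of_mem hB haB).symm
    rw [hBpart, Finpartition.mem_part_ofSetoid_iff_rel]
    show a = σ a ∨ φ (Equiv.swap a (σ a)) c = c
    by_cases h : σ a = a
    · exact Or.inl h.symm
    · exact Or.inr (aux_key hloc c hσ h)
  · intro hpres
    suffices h : ∀ (k : ℕ) (τ : Equiv.Perm (Fin n)), τ.support.card ≤ k →
        (∀ B ∈ (Finpartition.ofSetoid s).parts, ∀ a ∈ B, τ a ∈ B) → φ τ c = c by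
      exact h σ.support.card σ le_rfl hpres
    intro k
    induction k with
    | zero =>
      intro τ hcard _
      have hτ1 : τ = 1 := by
        rw [← Equiv.Perm.support_eq_empty_iff]
        exact Finset.card_eq_zero.mp (Nat.le_zero.mp hcard)
      simp [hτ1]
    | succ k IH =>
      intro τ hcard hpres'
      by_cases h1 : τ = 1
      · simp [h1]
      obtain ⟨a, ha⟩ : ∃ a, τ a ≠ a := by
        by_contra hcon; push_neg at hcon; exact h1 (Equiv.ext hcon)
      have hmem : τ a ∈ (Finpartition.ofSetoid s).part a :=
        hpres' _ ((Finpartition.ofSetoid s).part_mem.mpr (Finset.mem_univ a)) a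
          ((Finpartition.ofSetoid s).mem_part (Finset.mem_univ a))
      have hrelmem : a = τ a ∨ φ (Equiv.swap a (τ a)) c = c :=
        Finpartition.mem_part_ofSetoid_iff_rel.mp hmem
      have hswapc : φ (Equiv.swap a (τ a)) c = c := by
        rcases hrelmem with h | h
        · exact absurd h.symm ha
        · exact h
      set τ' := Equiv.swap a (τ a) * τ with hτ'def
      have hcard' : τ'.support.card ≤ k := by
        have hlt := Equiv.Perm.card_support_swap_mul ha
        rw [← hτ'def] at hlt
        omega
      have hpres'' : ∀ B ∈ (Finpartition.ofSetoid s).parts, ∀ x ∈ B, τ' x ∈ B := by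
        intro B hB x hxB
        have hτx : τ x ∈ B := hpres' B hB x hxB
        show Equiv.swap a (τ a) (τ x) ∈ B
        by_cases hc1 : τ x = a
        · rw [hc1, Equiv.swap_apply_left]
          rw [hc1] at hτx
          exact hpres' B hB a hτx
        · by_cases hc2 : τ x = τ a
          · rw [hc2, Equiv.swap_apply_right]
            have hxa : x = a := τ.injective hc2
            rwa [← hxa]
          · rwa [Equiv.swap_apply_of_ne_of_ne hc1 hc2]
      have hτ'c : φ τ' c = c := IH τ' hcard' hpres''
      have hτeq : τ = Equiv.swap a (τ a) * τ' := (Equiv.swap_mul_self_mul _ _ τ).symm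
      rw [hτeq, map_mul, Equiv.Perm.mul_apply, hτ'c]
      exact hswapc
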